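/- arXiv:1302.1459 — 3 statements merged into one kernel-verified Lean document; each statement's English description precedes it below -/
import Mathlib

section
/- Let γ₀ > 0, n_R, n_D > 0, and g_SR, g_RD, g_RR > 0. Among all pairs (P_S, P_R) of nonnegative powers satisfying simultaneously g_RR P_R ≥ γ₀ (g_SR P_S + n_R) (IC condition), g_RD P_R ≥ γ₀ n_D, and g_SR P_S ≥ γ₀ n_R, the pair P_S* = γ₀ n_R / g_SR, P_R* = max{γ₀ n_D / g_RD, n_R γ₀ (γ₀+1) / g_RR} minimizes both P_S and P_R (i.e., any feasible pair (P_S, P_R) satisfies P_S ≥ P_S* and P_R ≥ P_R*). -/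
theorem stmt1 (γ₀ nR nD gSR gRD gRR : ℝ)
    (hγ : 0 < γ₀) (hnR : 0 < nR) (hnD : 0 < nD)
    (hSR : 0 < gSR) (hRD : 0 < gRD) (hRR : 0 < gRR)
    (PS PR : ℝ) (hPS0 : 0 ≤ PS) (hPR0 : 0 ≤ PR)
    (hIC : gRR * PR ≥ γ₀ * (gSR * PS + nR))
    (hRDsnr : gRD * PR ≥ γ₀ * nD)
    (hSRsnr : gSR * PS ≥ γ₀ * nR) :
    PS ≥ γ₀ * nR / gSR ∧
    PR ≥ max (γ₀ * nD / gRD) (nR * γ₀ * (γ₀ + 1) / gRR) := by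
  constructor
  · rw [ge_iff_le, div_le_iff₀ hSR]
    linarith
  · apply max_le
    · rw [div_le_iff₀ hRD]; linarith
    · rw [div_le_iff₀ hRR]; nlinarith
end

section
/- Let 0 < γ₀ and suppose P_R† = γ₀ n_D / g_RD and P_S† = γ₀((g_RR/g_SR) P_R† + n_R/g_SR) are the minimal powers without IC, while P_S* = γ₀ n_R / g_SR and P_R* = max{γ₀ n_D / g_RD, n_R γ₀(γ₀+1)/g_RR} are the minimal powers with IC. Then P_S* ≤ P_S† and P_R* ≥ P_R†; consequently the comparison of total powers P_S* + P_R* versus P_S† + P_R† can go either way: there exist parameter values (g_SR, g_RD, g_RR, n_R, n_D, γ₀) for which P_S* + P_R* > P_S† + P_R†, and parameter values for which P_S* + P_R* < P_S† + P_R†. -/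
theorem stmt4 :
    (∀ γ₀ nR nD gSR gRD gRR : ℝ,
      0 < γ₀ → 0 < nR → 0 < nD → 0 < gSR → 0 < gRD → 0 < gRR →
      γ₀ * nR / gSR ≤ γ₀ * ((gRR / gSR) * (γ₀ * nD / gRD) + nR / gSR) ∧
      max (γ₀ * nD / gRD) (nR * γ₀ * (γ₀ + 1) / gRR) ≥ γ₀ * nD / gRD) ∧
    (∃ γ₀ nR nD gSR gRD gRR : ℝ,
      0 < γ₀ ∧ 0 < nR ∧ 0 < nD ∧ 0 < gSR ∧ 0 < gRD ∧ 0 < gRR ∧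
      γ₀ * nR / gSR + max (γ₀ * nD / gRD) (nR * γ₀ * (γ₀ + 1) / gRR) >
        γ₀ * ((gRR / gSR) * (γ₀ * nD / gRD) + nR / gSR) + γ₀ * nD / gRD) ∧
    (∃ γ₀ nR nD gSR gRD gRR : ℝ,
      0 < γ₀ ∧ 0 < nR ∧ 0 < nD ∧ 0 < gSR ∧ 0 < gRD ∧ 0 < gRR ∧
      γ₀ * nR / gSR + max (γ₀ * nD / gRD) (nR * γ₀ * (γ₀ + 1) / gRR) <
        γ₀ * ((gRR / gSR) * (γ₀ * nD / gRD) + nR / gSR) + γ₀ * nD / gRD) := by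
  refine ⟨fun γ₀ nR nD gSR gRD gRR hγ hnR hnD hSR hRD hRR => ⟨?_, le_max_left _ _⟩,
    ⟨1, 1, 1, 1, 1, 1/10, one_pos, one_pos, one_pos, one_pos, one_pos, by norm_num, by norm_num⟩,
    ⟨1, 1, 1, 1, 1, 10, one_pos, one_pos, one_pos, one_pos, one_pos, by norm_num, by norm_num⟩⟩
  have h1 : 0 < gRR / gSR * (γ₀ * nD / gRD) := by positivity
  rw [mul_add, mul_div_assoc]
  nlinarith
end

section
/- Let A ∈ ℝ^{m×m} be row-stochastic with a unique stationary vector π (Aπ = π, Σπᵢ = 1, πᵢ ≥ 0). If y is a row vector with y(A − I + B) = 0, where B is the all-ones matrix, then y = 0. -/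
open Matrix

theorem stmt6 (m : ℕ) (A : Matrix (Fin m) (Fin m) ℝ)
    (hnonneg : ∀ i j, 0 ≤ A i j)
    (hrow : ∀ i, ∑ j, A i j = 1)
    (π : Fin m → ℝ)
    (hstat : A.mulVec π = π) (hsum : ∑ i, π i = 1) (hpos : ∀ i, 0 ≤ π i)
    (huniq : ∀ π' : Fin m → ℝ,
      A.mulVec π' = π' → ∑ i, π' i = 1 → (∀ i, 0 ≤ π' i) → π' = π)
    (B : Matrix (Fin m) (Fin m) ℝ) (hB : ∀ i j, B i j = 1)
    (y : Fin m → ℝ)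
    (hy : Matrix.vecMul y (A - 1 + B) = 0) :
    y = 0 := by
  rcases Nat.eq_zero_or_pos m with hm | hm
  · subst hm; funext i; exact absurd i.2 (by simp)
  -- Step: the matrix M := A - 1 + B is injective as mulVec
  set M := A - 1 + B with hM
  -- key: bound on mulVec
  have contraction : ∀ (u : Fin m → ℝ) (C : ℝ), (∀ j, |u j| ≤ C) → ∀ i, |A.mulVec u i| ≤ C := by
    intro u C hu i
    calc |A.mulVec u i| = |∑ j, A i j * u j| := rfl
      _ ≤ ∑ j, |A i j * u j| := Finset.abs_sum_le_sum_abs _ _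
      _ ≤ ∑ j, A i j * C := by
          apply Finset.sum_le_sum
          intro j _
          rw [abs_mul, abs_of_nonneg (hnonneg i j)]
          exact mul_le_mul_of_nonneg_left (hu j) (hnonneg i j)
      _ = C := by rw [← Finset.sum_mul, hrow i, one_mul]
  have hker : ∀ v, M.mulVec v = 0 → v = 0 := by
    intro v hv
    have hmv : ∀ i, A.mulVec v i = v i - ∑ j, v j := by
      intro i
      have := congrFun hv i
      simp only [hM, Matrix.add_mulVec, Matrix.sub_mulVec, Matrix.one_mulVec,
        Pi.add_apply, Pi.sub_apply, Pi.zero_apply] at this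
      have hBv : B.mulVec v i = ∑ j, v j := by
        simp [Matrix.mulVec, dotProduct, hB]
      linarith [this, hBv]
    set s := ∑ j, v j with hs
    -- iterate: A^k v i stays bounded
    obtain ⟨C, hC⟩ : ∃ C, ∀ j, |v j| ≤ C :=
      ⟨Finset.univ.sup' (by simp [Finset.univ_nonempty_iff]; exact Fin.pos_iff_nonempty.mp hm) (fun j => |v j|),
       fun j => Finset.le_sup' (fun j => |v j|) (Finset.mem_univ j)⟩
    have hiter : ∀ k : ℕ, ∀ i, (A ^ k).mulVec v i = v i - k * s := by
      intro k
      induction k with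
      | zero => intro i; simp
      | succ k ih =>
        intro i
        have : (A ^ (k+1)).mulVec v = A.mulVec ((A ^ k).mulVec v) := by
          rw [pow_succ', Matrix.mulVec_mulVec]
        rw [this]
        have h2 : (A ^ k).mulVec v = fun i => v i - k * s := funext ih
        rw [h2]
        have : A.mulVec (fun i => v i - k * s) = fun i => A.mulVec v i - k * s := by
          funext i
          simp [Matrix.mulVec, dotProduct, mul_sub, Finset.sum_sub_distrib, ← Finset.sum_mul, hrow i]
        rw [this]
        simp only [hmv i]
        push_cast
        ring
    have hbound : ∀ k : ℕ, ∀ i, |(A ^ k).mulVec v i| ≤ C := by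
      intro k
      induction k with
      | zero => intro i; simpa using hC i
      | succ k ih =>
        intro i
        have : (A ^ (k+1)).mulVec v = A.mulVec ((A ^ k).mulVec v) := by
          rw [pow_succ', Matrix.mulVec_mulVec]
        rw [this]
        exact contraction _ C ih i
    have hs0 : s = 0 := by
      by_contra hsne
      obtain ⟨i⟩ : Nonempty (Fin m) := Fin.pos_iff_nonempty.mp hm
      obtain ⟨k, hk⟩ := exists_nat_gt ((C + |v i|) / |s|)
      have habs : |s| > 0 := abs_pos.mpr hsne
      have h1 : |(A ^ k).mulVec v i| ≤ C := hbound k i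
      rw [hiter k i] at h1
      have h2 : (k : ℝ) * |s| > C + |v i| := by
        rw [gt_iff_lt, ← div_lt_iff₀ habs] at *
        exact hk
      have : |v i - k * s| ≥ k * |s| - |v i| := by
        calc |v i - k * s| ≥ |(k : ℝ) * s| - |v i| := by
              have := abs_sub_abs_le_abs_sub ((k : ℝ) * s) (v i)
              rw [abs_sub_comm] at this
              linarith [abs_sub_comm (v i) ((k:ℝ) * s)]
          _ = k * |s| - |v i| := by rw [abs_mul, Nat.abs_cast]
      linarith
    -- now A v = v
    have hav : A.mulVec v = v := by
      funext i; rw [hmv i, hs0, sub_zero]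
    -- π is uniform
    have hunif : π = fun _ => (m : ℝ)⁻¹ := by
      symm
      apply huniq
      · funext i
        simp [Matrix.mulVec, dotProduct, ← Finset.sum_mul, hrow i]
      · simp [Finset.card_univ]
        field_simp
      · intro i; positivity
    -- perturb
    have hmR : (0:ℝ) < m := by exact_mod_cast hm
    set ε : ℝ := (m : ℝ)⁻¹ / (C + 1) with hε
    have hCnn : 0 ≤ C := le_trans (abs_nonneg _) (hC ⟨0, hm⟩)
    have hεpos : 0 < ε := by positivity
    have hπ' := huniq (fun i => π i + ε * v i) ?_ ?_ ?_
    · funext i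
      have := congrFun hπ' i
      simp only [hunif] at this ⊢
      have : ε * v i = 0 := by linarith [this]
      have := mul_eq_zero.mp this
      rcases this with h | h
      · exact absurd h (ne_of_gt hεpos)
      · simpa using h
    · funext i
      have h1 : (A.mulVec fun j => π j + ε * v j) i = (A.mulVec π) i + ε * (A.mulVec v) i := by
        simp only [Matrix.mulVec, dotProduct, Finset.mul_sum, ← Finset.sum_add_distrib]
        congr 1; funext j; ring
      rw [h1, hstat, hav]
    · have hsv : ∑ j, v j = 0 := by rw [← hs]; exact hs0
      rw [Finset.sum_add_distrib, hsum, ← Finset.mul_sum, hsv]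
      ring
    · intro i
      rw [hunif]
      simp only
      have h1 : |ε * v i| ≤ ε * C := by
        rw [abs_mul, abs_of_pos hεpos]
        exact mul_le_mul_of_nonneg_left (hC i) (le_of_lt hεpos)
      have h2 : ε * C ≤ (m:ℝ)⁻¹ := by
        rw [hε, div_mul_eq_mul_div, div_le_iff₀ (by positivity)]
        have : (m:ℝ)⁻¹ * C ≤ (m:ℝ)⁻¹ * (C+1) := by
          apply mul_le_mul_of_nonneg_left _ (by positivity)
          linarith
        linarith [this]
      have := neg_abs_le (ε * v i)
      linarith
  have hinj : Function.Injective M.mulVec := by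
    intro v w h
    have := hker (v - w) (by rw [Matrix.mulVec_sub, h, sub_self])
    exact sub_eq_zero.mp this
  have hunit : IsUnit M := Matrix.mulVec_injective_iff_isUnit.mp hinj
  have := Matrix.vecMul_injective_iff_isUnit.mpr hunit
  have h0 : Matrix.vecMul (0 : Fin m → ℝ) M = 0 := by simp
  exact this (hy.trans h0.symm)
end
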